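/- arXiv:2209.12828 — 8 statements merged into one kernel-verified Lean document; each statement's English description precedes it below -/
import Mathlib

section
/- Let s ∈ (0,1) and define f(x) = x⁴ - 2x³ + (1-s)x² + 2sx - s. Then f(x) ≥ 0 for every x ∈ [√s, √2]. -/
theorem quartic_nonneg_of_pos_s (s : ℝ) (hs : s ∈ Set.Ioo (0:ℝ) 1)
    (x : ℝ) (hx : x ∈ Set.Icc (Real.sqrt s) (Real.sqrt 2)) :
    x^4 - 2*x^3 + (1 - s)*x^2 + 2*s*x - s ≥ 0 := by
  have h1 : Real.sqrt s ≤ x := hx.1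
  have h0 : (0:ℝ) ≤ Real.sqrt s := Real.sqrt_nonneg s
  have hsq : Real.sqrt s ^ 2 = s := Real.sq_sqrt hs.1.le
  have hx2 : s ≤ x^2 := by nlinarith
  nlinarith [sq_nonneg (x - 1), mul_nonneg (by linarith : (0:ℝ) ≤ x^2 - s) (sq_nonneg (x-1))]
end

section
/- For all real a₁, b₋, c₋: sin b₋ · sin c₋ + 2·√(1 - sin a₁ · cos b₋ · cos c₋) - (1 - sin a₁ · cos b₋ · cos c₋) ≥ 0. -/
set_option maxHeartbeats 1000000 in

theorem holz_I6 (a₁ b c : ℝ) :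
    Real.sin b * Real.sin c
      + 2 * Real.sqrt (1 - Real.sin a₁ * Real.cos b * Real.cos c)
      - (1 - Real.sin a₁ * Real.cos b * Real.cos c) ≥ 0 := by
  set sa := Real.sin a₁
  set sb := Real.sin b
  set sc := Real.sin c
  set cb := Real.cos b
  set cc := Real.cos c
  have hb : sb ^ 2 + cb ^ 2 = 1 := Real.sin_sq_add_cos_sq b
  have hc : sc ^ 2 + cc ^ 2 = 1 := Real.sin_sq_add_cos_sq c
  have ha : sa ^ 2 ≤ 1 := Real.sin_sq_le_one a₁
  set u := |cb * cc| with hu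
  have hu0 : 0 ≤ u := abs_nonneg _
  have hu1 : u ≤ 1 := by
    rw [abs_le]; constructor <;> nlinarith [sq_nonneg (cb - cc), sq_nonneg (cb + cc)]
  have habs : |sa * cb * cc| ≤ u := by
    rw [hu, mul_assoc, abs_mul]
    nlinarith [abs_nonneg (cb * cc), sq_abs sa, abs_nonneg sa, sq_nonneg (|sa| - 1)]
  have ht : (0:ℝ) ≤ 1 - sa * cb * cc := by
    have := abs_le.mp habs; linarith
  set r := Real.sqrt (1 - sa * cb * cc) with hr
  have hr0 : 0 ≤ r := Real.sqrt_nonneg _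
  have hr2 : r ^ 2 = 1 - sa * cb * cc := Real.sq_sqrt ht
  have hA : |r - 1| ≤ u := by
    calc |r - 1| ≤ |r - 1| * (r + 1) := by nlinarith [abs_nonneg (r - 1)]
    _ = |r - 1| * |r + 1| := by rw [abs_of_nonneg (by linarith : (0:ℝ) ≤ r + 1)]
    _ = |(r - 1) * (r + 1)| := (abs_mul _ _).symm
    _ = |sa * cb * cc| := by
        rw [show (r - 1) * (r + 1) = r ^ 2 - 1 by ring, hr2, show 1 - sa * cb * cc - 1 = -(sa * cb * cc) by ring, abs_neg]
    _ ≤ u := habs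
  have hA2 : (r - 1) ^ 2 ≤ u := by
    calc (r - 1) ^ 2 = |r - 1| ^ 2 := (sq_abs _).symm
    _ ≤ u ^ 2 := by nlinarith [abs_nonneg (r - 1)]
    _ ≤ u := by nlinarith
  have hB : -(1 - u) ≤ sb * sc := by
    have h2 : (sb * sc) ^ 2 ≤ (1 - u) ^ 2 := by
      nlinarith [sq_abs (cb * cc), abs_le.mp (le_refl u) , sq_nonneg (|cb| - |cc|),
        abs_mul cb cc, sq_abs cb, sq_abs cc, abs_nonneg cb, abs_nonneg cc]
    nlinarith [abs_nonneg (sb * sc), sq_abs (sb * sc), neg_abs_le (sb * sc)]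
  nlinarith [hA2, hB]
end

section
/- For ν ∈ (1/2, 1], the maximum over real angles a₁, b₋, c₋ of (2ν-1)·sin a₁·cos b₋·cos c₋ + sin b₋ + sin c₋ - sin b₋·sin c₋ equals 2ν + 1/(2ν) - 1, attained at a₁ = π/2, b₋ = arctan(1/√(4ν²-1)), c₋ = arcsin(1/(2ν)). -/
open Real

/-- Cauchy-Schwarz style bound: `a*u + b*v ≤ √(a²+b²)` when `u²+v²=1`. -/
lemma holz_aux_cs (a b u v : ℝ) (huv : u^2 + v^2 = 1) :
    a*u + b*v ≤ Real.sqrt (a^2 + b^2) := by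
  rcases le_or_gt (a*u + b*v) 0 with h | h
  · exact h.trans (Real.sqrt_nonneg _)
  · have h2 : (a*u + b*v)^2 ≤ a^2 + b^2 := by nlinarith [sq_nonneg (a*v - b*u)]
    calc a*u + b*v = Real.sqrt ((a*u+b*v)^2) := (Real.sqrt_sq h.le).symm
      _ ≤ Real.sqrt (a^2 + b^2) := Real.sqrt_le_sqrt h2

/-- Core upper bound. -/
lemma holz_aux_ub (k e x y u w : ℝ) (hk : 0 ≤ k) (hke : (k+1)*e = 1)
    (hx2 : x ≤ 1) (hu0 : 0 ≤ u) (hux : u^2 + x^2 = 1) (hwy : w^2 + y^2 = 1) :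
    k*(u*w) + x + y - x*y ≤ k + e := by
  have hk1 : (0:ℝ) < k + 1 := by linarith
  have he0 : 0 < e := by
    rcases le_or_gt e 0 with h | h
    · nlinarith [mul_nonpos_of_nonneg_of_nonpos hk1.le h]
    · exact h
  have hMx : 0 ≤ k + e - x := by
    nlinarith [sq_nonneg k, mul_nonneg hk1.le (by linarith : (0:ℝ) ≤ 1 - x)]
  have step2 : k*u*w + (1-x)*y ≤ Real.sqrt ((k*u)^2 + (1-x)^2) :=
    holz_aux_cs (k*u) (1-x) w y hwy
  have step3 : Real.sqrt ((k*u)^2 + (1-x)^2) ≤ k + e - x := by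
    rw [show (k + e - x) = Real.sqrt ((k + e - x)^2) from (Real.sqrt_sq hMx).symm]
    apply Real.sqrt_le_sqrt
    have hu2 : u^2 = 1 - x^2 := by linarith
    have key : (k+e-x)^2 - (k^2*(1-x^2) + (1-x)^2) = (k*(x-e))^2 := by
      linear_combination ((1-k)*e + 1 - 2*x*(1-k)) * hke
    nlinarith [sq_nonneg (k*(x-e)), key, hu2]
  nlinarith [step2, step3]

theorem holz_max_bell_value (ν : ℝ) (hν : ν ∈ Set.Ioc (1/2 : ℝ) 1) :
    IsGreatest {v : ℝ | ∃ a₁ b c : ℝ,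
        v = (2*ν - 1) * Real.sin a₁ * Real.cos b * Real.cos c
            + Real.sin b + Real.sin c - Real.sin b * Real.sin c}
      (2*ν + 1/(2*ν) - 1)
    ∧ (2*ν - 1) * Real.sin (Real.pi/2)
        * Real.cos (Real.arctan (1 / Real.sqrt (4*ν^2 - 1)))
        * Real.cos (Real.arcsin (1/(2*ν)))
      + Real.sin (Real.arctan (1 / Real.sqrt (4*ν^2 - 1)))
      + Real.sin (Real.arcsin (1/(2*ν)))
      - Real.sin (Real.arctan (1 / Real.sqrt (4*ν^2 - 1)))
        * Real.sin (Real.arcsin (1/(2*ν)))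
      = 2*ν + 1/(2*ν) - 1 := by
  obtain ⟨hν1, hν2⟩ := hν
  have hν0 : (0:ℝ) < ν := by linarith
  have h2ν : (1:ℝ) < 2*ν := by linarith
  have hs2 : (0:ℝ) < 4*ν^2 - 1 := by nlinarith
  have hs_pos : 0 < Real.sqrt (4*ν^2 - 1) := Real.sqrt_pos.mpr hs2
  have hs_sq : Real.sqrt (4*ν^2 - 1)^2 = 4*ν^2 - 1 := Real.sq_sqrt hs2.le
  generalize hsd : Real.sqrt (4*ν^2 - 1) = s at hs_pos hs_sq
  -- the attained value equation
  have hsum : Real.sqrt (1 + (1/s)^2) = 2*ν/s := by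
    rw [show 1 + (1/s)^2 = (2*ν/s)^2 by field_simp; nlinarith [hs_sq]]
    exact Real.sqrt_sq (by positivity)
  have hcos_at : Real.cos (Real.arctan (1/s)) = s/(2*ν) := by
    rw [Real.cos_arctan, hsum]
    field_simp
  have hsin_at : Real.sin (Real.arctan (1/s)) = 1/(2*ν) := by
    rw [Real.sin_arctan, hsum]
    field_simp
  have hsin_as : Real.sin (Real.arcsin (1/(2*ν))) = 1/(2*ν) :=
    Real.sin_arcsin (le_trans (by norm_num) (by positivity : (0:ℝ) ≤ 1/(2*ν)))
      (by rw [div_le_one (by linarith)]; linarith)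
  have hcos_as : Real.cos (Real.arcsin (1/(2*ν))) = s/(2*ν) := by
    rw [Real.cos_arcsin]
    rw [show 1 - (1/(2*ν))^2 = (s/(2*ν))^2 by field_simp; nlinarith [hs_sq]]
    exact Real.sqrt_sq (by positivity)
  have heq : (2*ν - 1) * Real.sin (Real.pi/2)
        * Real.cos (Real.arctan (1 / s))
        * Real.cos (Real.arcsin (1/(2*ν)))
      + Real.sin (Real.arctan (1 / s))
      + Real.sin (Real.arcsin (1/(2*ν)))
      - Real.sin (Real.arctan (1 / s))
        * Real.sin (Real.arcsin (1/(2*ν)))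
      = 2*ν + 1/(2*ν) - 1 := by
    rw [Real.sin_pi_div_two, hcos_at, hsin_at, hsin_as, hcos_as]
    field_simp
    linear_combination (2*ν-1) * hs_sq
  refine ⟨⟨⟨Real.pi/2, Real.arctan (1/s), Real.arcsin (1/(2*ν)), heq.symm⟩, ?_⟩, heq⟩
  -- upper bound
  rintro v ⟨a₁, b, c, rfl⟩
  have hke : ((2*ν-1)+1)*(1/(2*ν)) = 1 := by field_simp; ring
  have hux : |Real.cos b|^2 + Real.sin b^2 = 1 := by
    rw [sq_abs]; exact Real.cos_sq_add_sin_sq b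
  have hwy : |Real.cos c|^2 + Real.sin c^2 = 1 := by
    rw [sq_abs]; exact Real.cos_sq_add_sin_sq c
  have hub := holz_aux_ub (2*ν-1) (1/(2*ν)) (Real.sin b) (Real.sin c)
    |Real.cos b| |Real.cos c| (by linarith) hke (Real.sin_le_one b)
    (abs_nonneg _) hux hwy
  -- step 1: bound the sin a₁ term
  have step1 : (2*ν - 1) * Real.sin a₁ * Real.cos b * Real.cos c
      ≤ (2*ν - 1) * (|Real.cos b| * |Real.cos c|) := by
    have h1 : Real.sin a₁ * Real.cos b * Real.cos c
        ≤ |Real.cos b| * |Real.cos c| := by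
      calc Real.sin a₁ * Real.cos b * Real.cos c
          ≤ |Real.sin a₁ * Real.cos b * Real.cos c| := le_abs_self _
        _ = |Real.sin a₁| * |Real.cos b| * |Real.cos c| := by
            rw [abs_mul, abs_mul]
        _ ≤ 1 * |Real.cos b| * |Real.cos c| := by
            gcongr
            exact Real.abs_sin_le_one a₁
        _ = |Real.cos b| * |Real.cos c| := by ring
    nlinarith [h1]
  linarith [hub, step1]
end

section
/- The function F(β) = 1 - h( (β + 1 + √(β² + 2β - 3)) / 4 ), where h is the binary entropy in base 2, is convex and monotonically increasing on the interval [1, 3/2]. -/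
noncomputable def binEnt (x : ℝ) : ℝ :=
  -x * Real.logb 2 x - (1 - x) * Real.logb 2 (1 - x)

noncomputable def holzBound (β : ℝ) : ℝ :=
  1 - binEnt ((β + 1 + Real.sqrt (β^2 + 2*β - 3)) / 4)

open Real Set

/-- Key inequality: `log t ≤ (t - 1/t)/2` for `t ≥ 1`. -/
lemma log_le_half_sub {t : ℝ} (ht : 1 ≤ t) : Real.log t ≤ (t - 1/t) / 2 := by
  have ht0 : (0:ℝ) < t := lt_of_lt_of_le one_pos ht
  have h : Real.log t ≤ Real.sinh (Real.log t) :=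
    Real.self_le_sinh_iff.2 (Real.log_nonneg ht)
  rwa [Real.sinh_eq, Real.exp_log ht0, Real.exp_neg, Real.exp_log ht0, ← one_div] at h

noncomputable def psi (u : ℝ) : ℝ :=
  (Real.log u - Real.log (1 - u)) * (2*u^2 / (4*u^2 - 1)) / Real.log 2

lemma psi_hasDerivAt {u : ℝ} (hu : u ∈ Ioo (1/2 : ℝ) 1) :
    HasDerivAt psi
      (((1/u + 1/(1-u)) * (2*u^2 / (4*u^2 - 1)) +
        (Real.log u - Real.log (1 - u)) *
          ((4*u*(4*u^2-1) - 2*u^2*(8*u)) / (4*u^2-1)^2)) / Real.log 2) u := by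
  obtain ⟨hu2, hu1⟩ := hu
  have hu0 : (0:ℝ) < u := by linarith
  have h1u : (0:ℝ) < 1 - u := by linarith
  have hden : 4*u^2 - 1 ≠ 0 := by nlinarith
  have hA : HasDerivAt (fun u : ℝ => Real.log u - Real.log (1 - u)) (1/u + 1/(1-u)) u := by
    have h1 : HasDerivAt (fun u : ℝ => Real.log u) (1/u) u := by
      simpa [one_div] using Real.hasDerivAt_log hu0.ne'
    have h2 : HasDerivAt (fun u : ℝ => (1:ℝ) - u) (-1) u := by
      simpa using (hasDerivAt_id u).const_sub 1
    have h3 := h2.log h1u.ne'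
    exact (h1.sub h3).congr_deriv (by ring)
  have hB : HasDerivAt (fun u : ℝ => 2*u^2 / (4*u^2 - 1))
      ((4*u*(4*u^2-1) - 2*u^2*(8*u)) / (4*u^2-1)^2) u := by
    have hnum : HasDerivAt (fun u : ℝ => 2*u^2) (4*u) u := by
      have := (hasDerivAt_pow 2 u).const_mul (2:ℝ)
      exact this.congr_deriv (by ring)
    have hden' : HasDerivAt (fun u : ℝ => 4*u^2 - 1) (8*u) u := by
      have := ((hasDerivAt_pow 2 u).const_mul (4:ℝ)).sub_const 1
      exact this.congr_deriv (by ring)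
    exact hnum.div hden' hden
  exact (hA.mul hB).div_const (Real.log 2)

lemma psi_deriv_nonneg {u : ℝ} (hu : u ∈ Ioo (1/2 : ℝ) 1) :
    0 ≤ ((1/u + 1/(1-u)) * (2*u^2 / (4*u^2 - 1)) +
        (Real.log u - Real.log (1 - u)) *
          ((4*u*(4*u^2-1) - 2*u^2*(8*u)) / (4*u^2-1)^2)) / Real.log 2 := by
  obtain ⟨hu2, hu1⟩ := hu
  have hu0 : (0:ℝ) < u := by linarith
  have h1u : (0:ℝ) < 1 - u := by linarith
  have hc : (0:ℝ) < 4*u^2 - 1 := by nlinarith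
  have ht : (1:ℝ) ≤ u / (1 - u) := by
    rw [le_div_iff₀ h1u]; linarith
  have hkey := log_le_half_sub ht
  have hlog : Real.log (u / (1-u)) = Real.log u - Real.log (1-u) :=
    Real.log_div hu0.ne' h1u.ne'
  rw [hlog] at hkey
  set A := Real.log u - Real.log (1 - u) with hA
  have hA2 : A * (2*u*(1-u)) ≤ 2*u - 1 := by
    have h2 : (u/(1-u) - 1/(u/(1-u))) / 2 * (2*u*(1-u)) = 2*u - 1 := by
      field_simp; ring
    calc A * (2*u*(1-u)) ≤ (u/(1-u) - 1/(u/(1-u))) / 2 * (2*u*(1-u)) := by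
          apply mul_le_mul_of_nonneg_right hkey; positivity
      _ = 2*u - 1 := h2
  apply div_nonneg _ (Real.log_nonneg one_le_two)
  have hEq : (1/u + 1/(1-u)) * (2*u^2 / (4*u^2 - 1)) +
        A * ((4*u*(4*u^2-1) - 2*u^2*(8*u)) / (4*u^2-1)^2)
      = (2*u^2*(4*u^2-1) - 4*u^2*(1-u)*A) / ((4*u^2-1)^2 * u * (1-u)) := by
    field_simp; ring
  rw [hEq]
  apply div_nonneg _ (by positivity)
  nlinarith [mul_le_mul_of_nonneg_left hA2 (le_of_lt (mul_pos (by norm_num : (0:ℝ) < 2) hu0)),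
    sq_nonneg (2*u - 1), mul_pos hu0 hu0]

lemma psi_monotoneOn : MonotoneOn psi (Ioo (1/2 : ℝ) 1) := by
  have h := monotoneOn_of_deriv_nonneg (convex_Ioo (1/2 : ℝ) 1)
    (fun u hu => ((psi_hasDerivAt hu).differentiableAt).continuousAt.continuousWithinAt)
    (fun u hu => by
      rw [interior_Ioo] at hu
      exact ((psi_hasDerivAt hu).differentiableAt).differentiableWithinAt)
    (fun u hu => by
      rw [interior_Ioo] at hu
      rw [(psi_hasDerivAt hu).deriv]
      exact psi_deriv_nonneg hu)
  exact h

lemma binEnt_eq (u : ℝ) : binEnt u = Real.binEntropy u / Real.log 2 := by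
  unfold binEnt Real.binEntropy Real.logb
  rw [Real.log_inv, Real.log_inv]
  ring

lemma holz_eq : holzBound = fun b : ℝ =>
    1 - Real.binEntropy ((b + 1 + Real.sqrt (b^2 + 2*b - 3)) / 4) / Real.log 2 := by
  funext b
  rw [holzBound, binEnt_eq]

lemma xf_mem {β : ℝ} (hβ : β ∈ Ioo (1:ℝ) (3/2)) :
    (β + 1 + Real.sqrt (β^2 + 2*β - 3)) / 4 ∈ Ioo (1/2 : ℝ) 1 := by
  obtain ⟨h1, h2⟩ := hβ
  have hsq : (0:ℝ) < β^2 + 2*β - 3 := by nlinarith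
  have hs : 0 < Real.sqrt (β^2 + 2*β - 3) := Real.sqrt_pos.2 hsq
  have hlt : Real.sqrt (β^2 + 2*β - 3) < 3 - β := by
    rw [Real.sqrt_lt' (by linarith)]
    nlinarith
  constructor
  · nlinarith
  · nlinarith

lemma holz_hasDerivAt {β : ℝ} (hβ : β ∈ Ioo (1:ℝ) (3/2)) :
    HasDerivAt holzBound (psi ((β + 1 + Real.sqrt (β^2 + 2*β - 3)) / 4)) β := by
  obtain ⟨h1, h2⟩ := hβ
  have hsq : (0:ℝ) < β^2 + 2*β - 3 := by nlinarith
  set s := Real.sqrt (β^2 + 2*β - 3) with hsdef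
  set x := (β + 1 + s) / 4 with hxdef
  have hs : 0 < s := Real.sqrt_pos.2 hsq
  have hs2 : s^2 = β^2 + 2*β - 3 := Real.sq_sqrt hsq.le
  have hx : x ∈ Ioo (1/2 : ℝ) 1 := xf_mem ⟨h1, h2⟩
  have hx0 : (0:ℝ) < x := by linarith [hx.1]
  have hx1 : x < 1 := hx.2
  have hseq : s = 4*x - β - 1 := by rw [hxdef]; ring
  have hkey2 : s * (2*x) = 4*x^2 - 1 := by
    rw [hseq]
    rw [hseq] at hs2
    nlinarith [hs2]
  have hc : (0:ℝ) < 4*x^2 - 1 := by rw [← hkey2]; positivity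
  have hd1 : HasDerivAt (fun b : ℝ => b^2 + 2*b - 3) (2*β + 2) β := by
    have := ((hasDerivAt_pow 2 β).add ((hasDerivAt_id β).const_mul 2)).sub_const 3
    exact this.congr_deriv (by ring)
  have hd2 : HasDerivAt (fun b : ℝ => Real.sqrt (b^2 + 2*b - 3)) (1/(2*s) * (2*β+2)) β :=
    (Real.hasDerivAt_sqrt hsq.ne').comp β hd1
  have hd3 : HasDerivAt (fun b : ℝ => (b + 1 + Real.sqrt (b^2 + 2*b - 3)) / 4)
      ((1 + 1/(2*s) * (2*β+2)) / 4) β := by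
    have := (((hasDerivAt_id β).add_const 1).add hd2).div_const 4
    exact this
  have hd4 : HasDerivAt Real.binEntropy (Real.log (1 - x) - Real.log x) x :=
    Real.hasDerivAt_binEntropy hx0.ne' (ne_of_lt hx1)
  have hd5 := hd4.comp β hd3
  have hd6 : HasDerivAt holzBound
      (-((Real.log (1 - x) - Real.log x) * ((1 + 1/(2*s) * (2*β+2)) / 4) / Real.log 2)) β := by
    rw [holz_eq]
    exact ((hd5.div_const (Real.log 2)).const_sub 1)
  convert hd6 using 1
  have hx' : (1 + 1/(2*s) * (2*β+2)) / 4 = 2*x^2 / (4*x^2 - 1) := by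
    rw [← hkey2]
    field_simp
    nlinarith [hseq]
  rw [psi, hx']
  ring

lemma holz_continuous : Continuous holzBound := by
  rw [holz_eq]
  have h1 : Continuous fun b : ℝ => (b + 1 + Real.sqrt (b^2 + 2*b - 3)) / 4 := by
    fun_prop
  exact continuous_const.sub ((Real.binEntropy_continuous.comp h1).div_const _)

theorem holzBound_convex_monotone :
    ConvexOn ℝ (Set.Icc (1:ℝ) (3/2)) holzBound ∧
    MonotoneOn holzBound (Set.Icc (1:ℝ) (3/2)) := by
  have hint : interior (Icc (1:ℝ) (3/2)) = Ioo 1 (3/2) := interior_Icc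
  have hcont : ContinuousOn holzBound (Icc (1:ℝ) (3/2)) := holz_continuous.continuousOn
  have hdiff : DifferentiableOn ℝ holzBound (interior (Icc (1:ℝ) (3/2))) := by
    rw [hint]
    exact fun β hβ => (holz_hasDerivAt hβ).differentiableAt.differentiableWithinAt
  have hderiv : ∀ β ∈ Ioo (1:ℝ) (3/2),
      deriv holzBound β = psi ((β + 1 + Real.sqrt (β^2 + 2*β - 3)) / 4) :=
    fun β hβ => (holz_hasDerivAt hβ).deriv
  constructor
  · apply MonotoneOn.convexOn_of_deriv (convex_Icc _ _) hcont hdiff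
    rw [hint]
    intro a ha b hb hab
    rw [hderiv a ha, hderiv b hb]
    have hsle := Real.sqrt_le_sqrt (show a^2 + 2*a - 3 ≤ b^2 + 2*b - 3 by
      nlinarith [ha.1, hb.1])
    exact psi_monotoneOn (xf_mem ha) (xf_mem hb) (by linarith)
  · apply monotoneOn_of_deriv_nonneg (convex_Icc _ _) hcont hdiff
    intro β hβ
    rw [hint] at hβ
    rw [hderiv β hβ]
    obtain ⟨hx2, hx1⟩ := xf_mem hβ
    set x := (β + 1 + Real.sqrt (β^2 + 2*β - 3)) / 4
    have hlog : Real.log (1 - x) ≤ Real.log x :=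
      Real.log_le_log (by linarith) (by linarith)
    have hc : (0:ℝ) < 4*x^2 - 1 := by nlinarith
    apply div_nonneg _ (Real.log_nonneg one_le_two)
    apply mul_nonneg (by linarith) (le_of_lt (by positivity))
end

section
/- Let (λ_{ijk})_{i,j,k∈{0,1}} be nonnegative reals summing to 1, and (c_{jk})_{j,k∈{0,1}} complex numbers with λ_{0jk}·λ_{1jk} ≥ |c_{jk}|² for all j,k. Define S = Σ_{j,k}(λ_{0jk} - λ_{1jk}) and T = Σ_{j,k}(-1)^k · 2·Im(c_{jk}). Then S² + T² ≤ 1. -/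
set_option maxHeartbeats 1000000

private lemma cross_bound {x1 y1 s1 x2 y2 s2 : ℝ}
    (h1 : x1^2 + y1^2 ≤ s1^2) (h2 : x2^2 + y2^2 ≤ s2^2)
    (hs1 : 0 ≤ s1) (hs2 : 0 ≤ s2) :
    x1*x2 + y1*y2 ≤ s1*s2 := by
  nlinarith [sq_nonneg (x1*y2 - x2*y1), mul_nonneg hs1 hs2, sq_nonneg (x1*x2 + y1*y2 - s1*s2),
    sq_nonneg (x1*x2 + y1*y2 + s1*s2)]

private lemma im_sq_bound {a b : ℝ} {z : ℂ} (h : a * b ≥ ‖z‖ ^ 2) :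
    z.im ^ 2 ≤ a * b := by
  have := Complex.sq_norm z
  have h2 := Complex.normSq_apply z
  nlinarith [sq_nonneg z.re]

theorem mabk_XXX_XXY_bound (lam : Fin 2 → Fin 2 → Fin 2 → ℝ)
    (c : Fin 2 → Fin 2 → ℂ)
    (hnn : ∀ i j k, 0 ≤ lam i j k)
    (hsum : ∑ i : Fin 2, ∑ j : Fin 2, ∑ k : Fin 2, lam i j k = 1)
    (hc : ∀ j k, lam 0 j k * lam 1 j k ≥ ‖c j k‖ ^ 2) :
    (∑ j : Fin 2, ∑ k : Fin 2, (lam 0 j k - lam 1 j k))^2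
      + (∑ j : Fin 2, ∑ k : Fin 2, (-1 : ℝ)^(k : ℕ) * (2 * (c j k).im))^2 ≤ 1 := by
  simp only [Fin.sum_univ_two] at hsum ⊢
  -- abbreviations
  set a00 := lam 0 0 0; set a01 := lam 0 0 1; set a10 := lam 0 1 0; set a11 := lam 0 1 1
  set b00 := lam 1 0 0; set b01 := lam 1 0 1; set b10 := lam 1 1 0; set b11 := lam 1 1 1
  have h00 := im_sq_bound (hc 0 0)
  have h01 := im_sq_bound (hc 0 1)
  have h10 := im_sq_bound (hc 1 0)
  have h11 := im_sq_bound (hc 1 1)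
  -- per-component vector norms
  have n00 : (a00 - b00)^2 + (2*(c 0 0).im)^2 ≤ (a00 + b00)^2 := by nlinarith
  have n01 : (a01 - b01)^2 + (-(2*(c 0 1).im))^2 ≤ (a01 + b01)^2 := by nlinarith
  have n10 : (a10 - b10)^2 + (2*(c 1 0).im)^2 ≤ (a10 + b10)^2 := by nlinarith
  have n11 : (a11 - b11)^2 + (-(2*(c 1 1).im))^2 ≤ (a11 + b11)^2 := by nlinarith
  have s00 : 0 ≤ a00 + b00 := by have := hnn 0 0 0; have := hnn 1 0 0; linarith
  have s01 : 0 ≤ a01 + b01 := by have := hnn 0 0 1; have := hnn 1 0 1; linarith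
  have s10 : 0 ≤ a10 + b10 := by have := hnn 0 1 0; have := hnn 1 1 0; linarith
  have s11 : 0 ≤ a11 + b11 := by have := hnn 0 1 1; have := hnn 1 1 1; linarith
  have c1 := cross_bound n00 n01 s00 s01
  have c2 := cross_bound n00 n10 s00 s10
  have c3 := cross_bound n00 n11 s00 s11
  have c4 := cross_bound n01 n10 s01 s10
  have c5 := cross_bound n01 n11 s01 s11
  have c6 := cross_bound n10 n11 s10 s11
  have key : ((a00-b00)+(a01-b01)+(a10-b10)+(a11-b11))^2
      + ((2*(c 0 0).im) + (-(2*(c 0 1).im)) + (2*(c 1 0).im) + (-(2*(c 1 1).im)))^2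
      ≤ ((a00+b00)+(a01+b01)+(a10+b10)+(a11+b11))^2 := by nlinarith [c1, c2, c3, c4, c5, c6]
  have hs : (a00+b00)+(a01+b01)+(a10+b10)+(a11+b11) = 1 := by linarith
  rw [hs] at key
  calc (a00 - b00 + (a01 - b01) + (a10 - b10 + (a11 - b11)))^2
      + ((-1:ℝ)^((0:Fin 2):ℕ) * (2*(c 0 0).im) + (-1:ℝ)^((1:Fin 2):ℕ) * (2*(c 0 1).im)
        + ((-1:ℝ)^((0:Fin 2):ℕ) * (2*(c 1 0).im) + (-1:ℝ)^((1:Fin 2):ℕ) * (2*(c 1 1).im))) ^2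
      = ((a00-b00)+(a01-b01)+(a10-b10)+(a11-b11))^2
      + ((2*(c 0 0).im) + (-(2*(c 0 1).im)) + (2*(c 1 0).im) + (-(2*(c 1 1).im)))^2 := by
        norm_num; ring
    _ ≤ 1^2 := key
    _ = 1 := one_pow 2
end

section
/- Let (λ_{ijk})_{i,j,k∈{0,1}} be nonnegative reals summing to 1, and (c_{jk})_{j,k∈{0,1}} complex numbers with λ_{0jk}·λ_{1jk} ≥ |c_{jk}|² for all j,k. Define S' = Σ_{j,k}(-1)^{j+k}(λ_{0jk} - λ_{1jk}) and T' = Σ_{j,k}(-1)^j · 2·Im(c_{jk}). Then S'² + T'² ≤ 1. -/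
theorem mabk_XYY_XYX_bound (lam : Fin 2 → Fin 2 → Fin 2 → ℝ)
    (c : Fin 2 → Fin 2 → ℂ)
    (hnn : ∀ i j k, 0 ≤ lam i j k)
    (hsum : ∑ i : Fin 2, ∑ j : Fin 2, ∑ k : Fin 2, lam i j k = 1)
    (hc : ∀ j k, lam 0 j k * lam 1 j k ≥ ‖c j k‖ ^ 2) :
    (∑ j : Fin 2, ∑ k : Fin 2, (-1 : ℝ)^((j : ℕ) + (k : ℕ)) * (lam 0 j k - lam 1 j k))^2
      + (∑ j : Fin 2, ∑ k : Fin 2, (-1 : ℝ)^(j : ℕ) * (2 * (c j k).im))^2 ≤ 1 := by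
  set z : Fin 2 → Fin 2 → ℂ := fun j k =>
    ⟨(-1 : ℝ)^((j : ℕ) + (k : ℕ)) * (lam 0 j k - lam 1 j k),
     (-1 : ℝ)^(j : ℕ) * (2 * (c j k).im)⟩ with hz
  have him : ∀ j k, (2 * (c j k).im)^2 ≤ 4 * (lam 0 j k * lam 1 j k) := by
    intro j k
    have h1 := hc j k
    have h2 : (c j k).im ^ 2 ≤ ‖c j k‖ ^ 2 := by
      rw [Complex.sq_norm, Complex.normSq_apply]
      nlinarith [sq_nonneg (c j k).re]
    nlinarith
  have habs : ∀ j k, ‖z j k‖ ≤ lam 0 j k + lam 1 j k := by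
    intro j k
    have hb : 0 ≤ lam 0 j k + lam 1 j k := by
      have := hnn 0 j k; have := hnn 1 j k; linarith
    have hsq : ‖z j k‖ ^ 2 ≤ (lam 0 j k + lam 1 j k) ^ 2 := by
      rw [Complex.sq_norm, Complex.normSq_apply]
      have hs : ((-1 : ℝ)^((j : ℕ) + (k : ℕ)))^2 = 1 := by
        rw [← pow_mul, mul_comm, pow_mul]; norm_num
      have ht : ((-1 : ℝ)^(j : ℕ))^2 = 1 := by
        rw [← pow_mul, mul_comm, pow_mul]; norm_num
      simp only [hz]
      have h4 := him j k
      nlinarith [sq_nonneg (lam 0 j k - lam 1 j k)]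
    nlinarith [norm_nonneg (z j k)]
  have hzsum : ‖∑ j : Fin 2, ∑ k : Fin 2, z j k‖ ≤ 1 := by
    calc ‖∑ j : Fin 2, ∑ k : Fin 2, z j k‖
        ≤ ∑ j : Fin 2, ‖∑ k : Fin 2, z j k‖ := norm_sum_le _ _
      _ ≤ ∑ j : Fin 2, ∑ k : Fin 2, ‖z j k‖ :=
          Finset.sum_le_sum (fun j _ => norm_sum_le _ _)
      _ ≤ ∑ j : Fin 2, ∑ k : Fin 2, (lam 0 j k + lam 1 j k) :=
          Finset.sum_le_sum (fun j _ => Finset.sum_le_sum (fun k _ => habs j k))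
      _ = 1 := by
          rw [← hsum]; simp [Fin.sum_univ_two]; ring
  have hre : (∑ j : Fin 2, ∑ k : Fin 2, z j k).re
      = ∑ j : Fin 2, ∑ k : Fin 2, (-1 : ℝ)^((j : ℕ) + (k : ℕ)) * (lam 0 j k - lam 1 j k) := by
    simp [hz, Fin.sum_univ_two]
  have him' : (∑ j : Fin 2, ∑ k : Fin 2, z j k).im
      = ∑ j : Fin 2, ∑ k : Fin 2, (-1 : ℝ)^(j : ℕ) * (2 * (c j k).im) := by
    simp [hz, Fin.sum_univ_two]
  have key : ‖∑ j : Fin 2, ∑ k : Fin 2, z j k‖ ^ 2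
      = (∑ j : Fin 2, ∑ k : Fin 2, (-1 : ℝ)^((j : ℕ) + (k : ℕ)) * (lam 0 j k - lam 1 j k))^2
        + (∑ j : Fin 2, ∑ k : Fin 2, (-1 : ℝ)^(j : ℕ) * (2 * (c j k).im))^2 := by
    rw [Complex.sq_norm, Complex.normSq_apply, hre, him']
    ring
  rw [← key]
  nlinarith [norm_nonneg (∑ j : Fin 2, ∑ k : Fin 2, z j k)]
end

section
/- Let h be the binary entropy in base 2 and β ∈ [2√2, 4]. The function G(β) = 1 - h(1/2 + (1/2)√(β²/8 - 1)) is convex and monotonically increasing on [2√2, 4]. -/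
noncomputable def mabkBound (β : ℝ) : ℝ :=
  1 - binEnt (1/2 + (1/2) * Real.sqrt (β^2/8 - 1))

noncomputable def uuAux (β : ℝ) : ℝ := Real.sqrt (β^2/8 - 1)

noncomputable def D1Aux (β : ℝ) : ℝ :=
  β * (Real.log (1 + uuAux β) - Real.log (1 - uuAux β)) / (16 * uuAux β * Real.log 2)

noncomputable def D2Aux (β : ℝ) : ℝ :=
  ((1 * (Real.log (1 + uuAux β) - Real.log (1 - uuAux β)) +
      β * (β / (8 * uuAux β) / (1 + uuAux β) - -(β / (8 * uuAux β)) / (1 - uuAux β))) *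
        (16 * uuAux β * Real.log 2) -
      β * (Real.log (1 + uuAux β) - Real.log (1 - uuAux β)) *
        (16 * (β / (8 * uuAux β)) * Real.log 2)) /
    (16 * uuAux β * Real.log 2) ^ 2

lemma log_le_half_sub_inv {x : ℝ} (hx : 1 ≤ x) : Real.log x ≤ (x - x⁻¹) / 2 := by
  have hd : ∀ y ∈ Set.Ici (1:ℝ),
      HasDerivAt (fun t : ℝ => (t - t⁻¹) / 2 - Real.log t) ((1 - -(y^2)⁻¹) / 2 - y⁻¹) y := by
    intro y hy
    have hy0 : y ≠ 0 := by have : (1:ℝ) ≤ y := hy; positivity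
    exact (((hasDerivAt_id' y).sub (hasDerivAt_inv hy0)).div_const 2).sub (Real.hasDerivAt_log hy0)
  have hmono : MonotoneOn (fun t : ℝ => (t - t⁻¹) / 2 - Real.log t) (Set.Ici 1) := by
    apply monotoneOn_of_deriv_nonneg (convex_Ici 1)
    · exact fun y hy => (hd y hy).continuousAt.continuousWithinAt
    · intro y hy
      rw [interior_Ici] at hy
      exact ((hd y (Set.mem_Ici.2 (le_of_lt (Set.mem_Ioi.1 hy)))).differentiableAt).differentiableWithinAt
    · intro y hy
      rw [interior_Ici] at hy
      rw [(hd y (Set.mem_Ici.2 (le_of_lt (Set.mem_Ioi.1 hy)))).deriv]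
      have hy0 : (0:ℝ) < y := lt_trans one_pos hy
      have : (1 - -(y^2)⁻¹) / 2 - y⁻¹ = (y - 1)^2 / (2 * y^2) := by
        field_simp
        ring
      rw [this]
      positivity
  have h01 : (1:ℝ) ∈ Set.Ici (1:ℝ) := Set.mem_Ici.2 le_rfl
  have := hmono h01 hx hx
  simp at this
  linarith

lemma log_ratio_le {u : ℝ} (h0 : 0 < u) (h1 : u < 1) :
    Real.log (1 + u) - Real.log (1 - u) ≤ 2 * u / (1 - u^2) := by
  have h1u : (0:ℝ) < 1 - u := by linarith
  have h1u' : (0:ℝ) < 1 + u := by linarith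
  have hx : 1 ≤ (1 + u) / (1 - u) := by
    rw [le_div_iff₀ h1u]; linarith
  have h := log_le_half_sub_inv hx
  rw [Real.log_div (ne_of_gt h1u') (ne_of_gt h1u)] at h
  have e : ((1 + u) / (1 - u) - ((1 + u) / (1 - u))⁻¹) / 2 = 2 * u / (1 - u^2) := by
    have hne : (1:ℝ) - u^2 ≠ 0 := by nlinarith
    rw [inv_div]
    field_simp
    ring
  rw [e] at h
  exact h

lemma uu_facts {β : ℝ} (hβ : β ∈ Set.Ioo (2 * Real.sqrt 2) 4) :
    0 < uuAux β ∧ uuAux β < 1 ∧ (uuAux β)^2 = β^2/8 - 1 ∧ 8 < β^2 := by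
  obtain ⟨h1, h2⟩ := hβ
  have hs2 : (0:ℝ) < Real.sqrt 2 := Real.sqrt_pos.2 (by norm_num)
  have hβ0 : 0 < β := lt_trans (by positivity) h1
  have h8 : 8 < β^2 := by
    have e : (2*Real.sqrt 2)^2 = 8 := by
      rw [mul_pow, Real.sq_sqrt (by norm_num : (0:ℝ) ≤ 2)]; norm_num
    nlinarith
  have hspos : 0 < β^2/8 - 1 := by linarith
  refine ⟨Real.sqrt_pos.2 hspos, ?_, Real.sq_sqrt hspos.le, h8⟩
  rw [uuAux]
  exact (Real.sqrt_lt' one_pos).2 (by nlinarith)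

lemma hasDerivAt_uuAux {β : ℝ} (hβ : β ∈ Set.Ioo (2 * Real.sqrt 2) 4) :
    HasDerivAt uuAux (β / (8 * uuAux β)) β := by
  obtain ⟨hu0, hu1, hu2, h8⟩ := uu_facts hβ
  have hspos : 0 < β^2/8 - 1 := by linarith
  have hinner : HasDerivAt (fun b : ℝ => b^2/8 - 1) (β/4) β := by
    have h := ((hasDerivAt_pow 2 β).div_const 8).sub_const 1
    refine h.congr_deriv (Eq.symm ?_)
    norm_num
    ring
  have h := (Real.hasDerivAt_sqrt (ne_of_gt hspos)).comp β hinner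
  have hu0' : (0:ℝ) < Real.sqrt (β^2/8 - 1) := hu0
  have e : 1 / (2 * Real.sqrt (β^2/8 - 1)) * (β/4) = β / (8 * uuAux β) := by
    rw [uuAux]
    field_simp
    ring
  rw [e] at h
  exact h

lemma hasDerivAt_mabk {β : ℝ} (hβ : β ∈ Set.Ioo (2 * Real.sqrt 2) 4) :
    HasDerivAt mabkBound (D1Aux β) β := by
  obtain ⟨hu0, hu1, hu2, h8⟩ := uu_facts hβ
  have hβ0 : 0 < β := lt_trans (by positivity) hβ.1
  have hmb : mabkBound = fun b => 1 - (-(1/2 + 1/2 * uuAux b) *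
      (Real.log (1/2 + 1/2 * uuAux b) / Real.log 2) -
      (1 - (1/2 + 1/2 * uuAux b)) * (Real.log (1 - (1/2 + 1/2 * uuAux b)) / Real.log 2)) := by
    funext b
    simp only [mabkBound, binEnt, Real.logb, uuAux]
  set u := uuAux β with hu
  have hU : HasDerivAt uuAux (β / (8 * u)) β := hasDerivAt_uuAux hβ
  have hxpos : (0:ℝ) < 1/2 + 1/2 * u := by linarith
  have h1xpos : (0:ℝ) < 1 - (1/2 + 1/2 * u) := by linarith
  have hx : HasDerivAt (fun b => 1/2 + 1/2 * uuAux b) (1/2 * (β/(8*u))) β :=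
    (hU.const_mul (1/2)).const_add (1/2)
  have h1x : HasDerivAt (fun b => 1 - (1/2 + 1/2 * uuAux b)) (-(1/2 * (β/(8*u)))) β :=
    hx.const_sub 1
  have hlog1 : HasDerivAt (fun b => Real.log (1/2 + 1/2 * uuAux b))
      (1/2 * (β/(8*u)) / (1/2 + 1/2 * u)) β := hx.log (ne_of_gt hxpos)
  have hlog2 : HasDerivAt (fun b => Real.log (1 - (1/2 + 1/2 * uuAux b)))
      (-(1/2 * (β/(8*u))) / (1 - (1/2 + 1/2 * u))) β := h1x.log (ne_of_gt h1xpos)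
  rw [hmb]
  have h := (((hx.neg.mul (hlog1.div_const (Real.log 2))).sub
    (h1x.mul (hlog2.div_const (Real.log 2)))).const_sub 1)
  refine h.congr_deriv (Eq.symm ?_)
  have e1 : Real.log (1/2 + 1/2 * u) = Real.log (1 + u) - Real.log 2 := by
    rw [show (1/2 + 1/2*u : ℝ) = (1+u)/2 by ring,
      Real.log_div (by linarith) (by norm_num)]
  have e2 : Real.log (1 - (1/2 + 1/2 * u)) = Real.log (1 - u) - Real.log 2 := by
    rw [show (1 - (1/2+1/2*u) : ℝ) = (1-u)/2 by ring,
      Real.log_div (by linarith) (by norm_num)]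
  have hl2p : (0:ℝ) < Real.log 2 := Real.log_pos (by norm_num)
  have h1u : (0:ℝ) < 1 - u := by linarith
  have h1u' : (0:ℝ) < 1 + u := by linarith
  simp only [D1Aux, ← hu, e1, e2, Pi.neg_apply]
  rw [show (1 - (1/2 + 1/2*u) : ℝ) = (1-u)/2 from by ring,
    show (1/2 + 1/2*u : ℝ) = (1+u)/2 from by ring]
  field_simp [hu0.ne', hl2p.ne', h1u.ne', h1u'.ne']
  ring

lemma hasDerivAt_D1Aux {β : ℝ} (hβ : β ∈ Set.Ioo (2 * Real.sqrt 2) 4) :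
    HasDerivAt D1Aux (D2Aux β) β := by
  obtain ⟨hu0, hu1, hu2, h8⟩ := uu_facts hβ
  have hU := hasDerivAt_uuAux hβ
  have hl2p : (0:ℝ) < Real.log 2 := Real.log_pos (by norm_num)
  have hl1 : HasDerivAt (fun b => Real.log (1 + uuAux b)) ((β/(8*uuAux β)) / (1 + uuAux β)) β :=
    (hU.const_add 1).log (by linarith)
  have hl2 : HasDerivAt (fun b => Real.log (1 - uuAux b)) ((-(β/(8*uuAux β))) / (1 - uuAux β)) β :=
    (hU.const_sub 1).log (by linarith)
  have hN : HasDerivAt (fun b => b * (Real.log (1 + uuAux b) - Real.log (1 - uuAux b)))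
      (1 * (Real.log (1 + uuAux β) - Real.log (1 - uuAux β)) +
        β * ((β/(8*uuAux β))/(1+uuAux β) - (-(β/(8*uuAux β)))/(1-uuAux β))) β :=
    (hasDerivAt_id' β).mul (hl1.sub hl2)
  have hDn : HasDerivAt (fun b => 16 * uuAux b * Real.log 2)
      (16 * (β/(8*uuAux β)) * Real.log 2) β :=
    (hU.const_mul 16).mul_const (Real.log 2)
  have hne : 16 * uuAux β * Real.log 2 ≠ 0 :=
    ne_of_gt (mul_pos (mul_pos (by norm_num) hu0) hl2p)
  exact hN.div hDn hne

lemma D1Aux_nonneg {β : ℝ} (hβ : β ∈ Set.Ioo (2 * Real.sqrt 2) 4) : 0 ≤ D1Aux β := by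
  obtain ⟨hu0, hu1, hu2, h8⟩ := uu_facts hβ
  have hβ0 : 0 < β := lt_trans (by positivity) hβ.1
  have hl2p : (0:ℝ) < Real.log 2 := Real.log_pos (by norm_num)
  have hlog : Real.log (1 - uuAux β) ≤ Real.log (1 + uuAux β) :=
    Real.log_le_log (by linarith) (by linarith)
  apply div_nonneg
  · exact mul_nonneg hβ0.le (by linarith)
  · exact le_of_lt (mul_pos (mul_pos (by norm_num) hu0) hl2p)

lemma D2Aux_nonneg {β : ℝ} (hβ : β ∈ Set.Ioo (2 * Real.sqrt 2) 4) : 0 ≤ D2Aux β := by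
  obtain ⟨hu0, hu1, hu2, h8⟩ := uu_facts hβ
  set u := uuAux β with hu
  have hl2p : (0:ℝ) < Real.log 2 := Real.log_pos (by norm_num)
  have h1u : (0:ℝ) < 1 - u := by linarith
  have h1u' : (0:ℝ) < 1 + u := by linarith
  have hsq : (0:ℝ) < 1 - u^2 := by nlinarith
  set L := Real.log (1 + u) - Real.log (1 - u) with hL
  have hLb : L ≤ 2*u/(1-u^2) := log_ratio_le hu0 hu1
  have key : L*(1-u^2) ≤ 2*u := (le_div_iff₀ hsq).mp hLb
  have hrel : 8*u^2 - β^2 = -8 := by linarith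
  have e : D2Aux β = ((16*u^2*L - 2*β^2*L)*(1-u^2) + 4*β^2*u) /
      (256*u^3*(1-u^2)*Real.log 2) := by
    simp only [D2Aux, ← hu, ← hL]
    field_simp
    ring
  rw [e]
  apply div_nonneg
  · have h16 : 16*u^2*L - 2*β^2*L = -16*L := by linear_combination 2*L*hrel
    rw [h16]
    nlinarith [mul_pos hu0 (sub_pos.2 h8), key]
  · exact le_of_lt (mul_pos (mul_pos (mul_pos (by norm_num : (0:ℝ) < 256) (pow_pos hu0 3)) hsq) hl2p)

theorem mabkBound_convex_monotone :
    ConvexOn ℝ (Set.Icc (2 * Real.sqrt 2) 4) mabkBound ∧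
    MonotoneOn mabkBound (Set.Icc (2 * Real.sqrt 2) 4) := by
  have hbin : binEnt = fun x => -((x*Real.log x)/Real.log 2) -
      ((1-x)*Real.log (1-x))/Real.log 2 := by
    funext x; simp only [binEnt, Real.logb]; ring
  have cb : Continuous binEnt := by
    rw [hbin]
    exact ((Real.continuous_mul_log.div_const _).neg).sub
      ((Real.continuous_mul_log.comp (continuous_const.sub continuous_id)).div_const _)
  have cinner : Continuous fun β : ℝ => 1/2 + (1/2) * Real.sqrt (β^2/8 - 1) := by
    have : Continuous fun β : ℝ => β^2/8 - 1 := by continuity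
    exact continuous_const.add (continuous_const.mul (Real.continuous_sqrt.comp this))
  have hcont : Continuous mabkBound := by
    have : mabkBound = fun β => 1 - binEnt (1/2 + (1/2) * Real.sqrt (β^2/8 - 1)) := rfl
    rw [this]
    exact continuous_const.sub (cb.comp cinner)
  constructor
  · apply convexOn_of_deriv2_nonneg (convex_Icc _ _) hcont.continuousOn
    · rw [interior_Icc]
      exact fun x hx => (hasDerivAt_mabk hx).differentiableAt.differentiableWithinAt
    · rw [interior_Icc]
      intro x hx
      have hev : deriv mabkBound =ᶠ[nhds x] D1Aux := by
        filter_upwards [isOpen_Ioo.mem_nhds hx] with y hy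
        exact (hasDerivAt_mabk hy).deriv
      exact ((hasDerivAt_D1Aux hx).differentiableAt.congr_of_eventuallyEq
        hev).differentiableWithinAt
    · rw [interior_Icc]
      intro x hx
      have hev : deriv mabkBound =ᶠ[nhds x] D1Aux := by
        filter_upwards [isOpen_Ioo.mem_nhds hx] with y hy
        exact (hasDerivAt_mabk hy).deriv
      have h2 : deriv^[2] mabkBound x = deriv (deriv mabkBound) x := rfl
      rw [h2, hev.deriv_eq, (hasDerivAt_D1Aux hx).deriv]
      exact D2Aux_nonneg hx
  · apply monotoneOn_of_deriv_nonneg (convex_Icc _ _) hcont.continuousOn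
    · rw [interior_Icc]
      exact fun x hx => (hasDerivAt_mabk hx).differentiableAt.differentiableWithinAt
    · rw [interior_Icc]
      intro x hx
      rw [(hasDerivAt_mabk hx).deriv]
      exact D1Aux_nonneg hx
end

section
/- Let ρ_{ijk} ≥ 0 for i,j,k ∈ {0,1} with Σ ρ_{ijk} = 1 and ρ_{0jk} ≥ ρ_{1jk} for all j,k, and let t_{jk}, b₋, c₋ be real. Then Σ_{j,k} (ρ_{0jk} - ρ_{1jk})[sin(2t_{jk}) cos b₋ cos c₋ + (-1)^j cos(2t_{jk}) sin b₋ + (-1)^k cos(2t_{jk}) sin c₋] - Σ_{j,k} (-1)^{j+k}(ρ_{0jk} + ρ_{1jk}) sin b₋ sin c₋ ≤ 1. -/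
lemma holz_aux (θ X Y S : ℝ) (hid : X ^ 2 + Y ^ 2 = (1 + S) ^ 2) (h0 : 0 ≤ 1 + S) :
    Real.sin θ * X + Real.cos θ * Y ≤ 1 + S := by
  have pθ := Real.sin_sq_add_cos_sq θ
  have hL2 : (Real.sin θ * X + Real.cos θ * Y) ^ 2
      + (Real.cos θ * X - Real.sin θ * Y) ^ 2 = (1 + S) ^ 2 := by
    linear_combination (X ^ 2 + Y ^ 2) * pθ + hid
  nlinarith [sq_nonneg (Real.cos θ * X - Real.sin θ * Y), hL2, h0,
    sq_nonneg (Real.sin θ * X + Real.cos θ * Y - (1 + S))]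

lemma holz_blk (θ b c d r e₁ e₂ : ℝ)
    (h1 : e₁ = 1 ∨ e₁ = -1) (h2 : e₂ = 1 ∨ e₂ = -1)
    (hd : 0 ≤ d) (hr : 0 ≤ r) :
    d * (Real.sin θ * Real.cos b * Real.cos c
        + e₁ * Real.cos θ * Real.sin b + e₂ * Real.cos θ * Real.sin c)
      - e₁ * e₂ * (d + 2 * r) * (Real.sin b * Real.sin c) ≤ d + 2 * r := by
  have pb := Real.sin_sq_add_cos_sq b
  have pc := Real.sin_sq_add_cos_sq c
  have hb1 : Real.sin b ^ 2 ≤ 1 := by nlinarith [sq_nonneg (Real.cos b)]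
  have hc1 : Real.sin c ^ 2 ≤ 1 := by nlinarith [sq_nonneg (Real.cos c)]
  have hs2 : (Real.sin b * Real.sin c) ^ 2 ≤ 1 := by
    nlinarith [mul_nonneg (sq_nonneg (Real.sin b)) (by linarith : (0:ℝ) ≤ 1 - Real.sin c ^ 2)]
  have h0 : 0 ≤ 1 + e₁ * e₂ * (Real.sin b * Real.sin c) := by
    rcases h1 with h | h <;> rcases h2 with h' | h' <;> subst h h' <;>
      nlinarith [sq_nonneg (1 + Real.sin b * Real.sin c), sq_nonneg (1 - Real.sin b * Real.sin c)]
  have hid : (Real.cos b * Real.cos c) ^ 2 + (e₁ * Real.sin b + e₂ * Real.sin c) ^ 2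
      = (1 + e₁ * e₂ * (Real.sin b * Real.sin c)) ^ 2 := by
    rcases h1 with h | h <;> rcases h2 with h' | h' <;> subst h h' <;>
      linear_combination (Real.cos c ^ 2) * pb + (1 - Real.sin b ^ 2) * pc
  have hkey := holz_aux θ (Real.cos b * Real.cos c) (e₁ * Real.sin b + e₂ * Real.sin c)
    (e₁ * e₂ * (Real.sin b * Real.sin c)) hid h0
  have h1' : d * (Real.sin θ * (Real.cos b * Real.cos c)
      + Real.cos θ * (e₁ * Real.sin b + e₂ * Real.sin c))
      ≤ d * (1 + e₁ * e₂ * (Real.sin b * Real.sin c)) := mul_le_mul_of_nonneg_left hkey hd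
  have h2' : 0 ≤ r * (1 + e₁ * e₂ * (Real.sin b * Real.sin c)) := mul_nonneg hr h0
  nlinarith [h1', h2']

theorem holz_C_le_one (ρ : Fin 2 → Fin 2 → Fin 2 → ℝ) (t : Fin 2 → Fin 2 → ℝ)
    (b c : ℝ)
    (hnn : ∀ i j k, 0 ≤ ρ i j k)
    (hsum : ∑ i : Fin 2, ∑ j : Fin 2, ∑ k : Fin 2, ρ i j k = 1)
    (hord : ∀ j k, ρ 1 j k ≤ ρ 0 j k) :
    (∑ j : Fin 2, ∑ k : Fin 2, (ρ 0 j k - ρ 1 j k) *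
        (Real.sin (2 * t j k) * Real.cos b * Real.cos c
          + (-1 : ℝ)^(j : ℕ) * Real.cos (2 * t j k) * Real.sin b
          + (-1 : ℝ)^(k : ℕ) * Real.cos (2 * t j k) * Real.sin c))
      - (∑ j : Fin 2, ∑ k : Fin 2, (-1 : ℝ)^((j : ℕ) + (k : ℕ)) * (ρ 0 j k + ρ 1 j k))
          * Real.sin b * Real.sin c ≤ 1 := by
  simp only [Fin.sum_univ_two] at hsum ⊢
  norm_num
  have h00 := holz_blk (2 * t 0 0) b c (ρ 0 0 0 - ρ 1 0 0) (ρ 1 0 0) 1 1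
    (Or.inl rfl) (Or.inl rfl) (by linarith [hord 0 0]) (hnn 1 0 0)
  have h01 := holz_blk (2 * t 0 1) b c (ρ 0 0 1 - ρ 1 0 1) (ρ 1 0 1) 1 (-1)
    (Or.inl rfl) (Or.inr rfl) (by linarith [hord 0 1]) (hnn 1 0 1)
  have h10 := holz_blk (2 * t 1 0) b c (ρ 0 1 0 - ρ 1 1 0) (ρ 1 1 0) (-1) 1
    (Or.inr rfl) (Or.inl rfl) (by linarith [hord 1 0]) (hnn 1 1 0)
  have h11 := holz_blk (2 * t 1 1) b c (ρ 0 1 1 - ρ 1 1 1) (ρ 1 1 1) (-1) (-1)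
    (Or.inr rfl) (Or.inr rfl) (by linarith [hord 1 1]) (hnn 1 1 1)
  linarith [h00, h01, h10, h11]
end
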